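/- Let γ ∈ ℂ with γ ∉ ℝ, and let X : ℝ → ℂ be twice continuously differentiable, satisfy |X(z)| + |X'(z)| + |X''(z)| ≤ C·e^{−c·z²} for all z ∈ ℝ and some constants C, c > 0, satisfy γ·(z² − γ)²·X(z) = (z² − γ)·X''(z) + 6z·X'(z) + 6·X(z) for every z ∈ ℝ, and suppose I := ∫_ℝ X(s) ds ≠ 0. Define W(z) := (∫_{−∞}^z X(s) ds)/I. Then W is three times continuously differentiable, satisfies γ·(γ − z²)²·W'(z) + D³[(γ − z²)·W(z)] = 0 for every z ∈ ℝ, and W(z) → 0 as z → −∞ and W(z) → 1 as z → +∞. -/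

import Mathlib

open Filter MeasureTheory Set

/-- The construction (3.9) of the paper: from the transformed eigenfunction `X`
with nonzero average, the profile `W(z) = (∫_{-∞}^z X)/(∫_ℝ X)` is `C³`, solves
`γ (γ - z²)² W' + D³[(γ - z²) W] = 0`, and tends to `0` at `-∞`, `1` at `+∞`. -/
theorem stmt6 (γ : ℂ) (hγ : γ.im ≠ 0)
    (X : ℝ → ℂ) (hX : ContDiff ℝ 2 X)
    (C c : ℝ) (hC : 0 < C) (hc : 0 < c)
    (hbound : ∀ z : ℝ,
      ‖X z‖ + ‖deriv X z‖ + ‖iteratedDeriv 2 X z‖ ≤ C * Real.exp (-c * z ^ 2))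
    (heq : ∀ z : ℝ,
      γ * ((z : ℂ) ^ 2 - γ) ^ 2 * X z
        = ((z : ℂ) ^ 2 - γ) * iteratedDeriv 2 X z + 6 * (z : ℂ) * deriv X z
          + 6 * X z)
    (hI : (∫ s : ℝ, X s) ≠ 0)
    (W : ℝ → ℂ)
    (hW : W = fun z : ℝ => (∫ s in Set.Iic z, X s) / (∫ s : ℝ, X s)) :
    ContDiff ℝ 3 W ∧
    (∀ z : ℝ, γ * (γ - (z : ℂ) ^ 2) ^ 2 * deriv W z
        + iteratedDeriv 3 (fun t : ℝ => (γ - (t : ℂ) ^ 2) * W t) z = 0) ∧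
    Tendsto W atBot (nhds 0) ∧ Tendsto W atTop (nhds 1) := by
  have hXc : Continuous X := hX.continuous
  -- integrability of X
  have hInt : Integrable X := by
    refine ((integrable_exp_neg_mul_sq hc).const_mul C).mono'
      hXc.aestronglyMeasurable (Filter.Eventually.of_forall fun z => ?_)
    have h := hbound z
    have h1 : (0:ℝ) ≤ ‖deriv X z‖ := norm_nonneg _
    have h2 : (0:ℝ) ≤ ‖iteratedDeriv 2 X z‖ := norm_nonneg _
    linarith
  set I : ℂ := ∫ s : ℝ, X s with hIdef
  set F : ℝ → ℂ := fun z => ∫ s in Set.Iic z, X s with hFdef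
  -- F has derivative X
  have hF : ∀ z : ℝ, HasDerivAt F (X z) z := by
    intro z
    have hFeq : ∀ t : ℝ, F t = F 0 + ∫ s in (0:ℝ)..t, X s := by
      intro t
      have h := intervalIntegral.integral_Iic_sub_Iic hInt.integrableOn hInt.integrableOn
        (a := (0:ℝ)) (b := t)
      rw [← h]; ring
    have hD : HasDerivAt (fun t => F 0 + ∫ s in (0:ℝ)..t, X s) (X z) z := by
      refine HasDerivAt.const_add _ ?_
      exact intervalIntegral.integral_hasDerivAt_right hInt.intervalIntegrable
        (hXc.stronglyMeasurableAtFilter _ _) hXc.continuousAt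
    exact hD.congr_of_eventuallyEq (Filter.Eventually.of_forall hFeq)
  have hWdef : W = fun z => F z / I := hW
  have hWD : ∀ z : ℝ, HasDerivAt W (X z / I) z := by
    intro z
    rw [hWdef]
    exact (hF z).div_const I
  have hderivW : deriv W = fun z => X z / I := funext fun z => (hWD z).deriv
  -- smoothness
  have hWdiff : Differentiable ℝ W := fun z => (hWD z).differentiableAt
  have hWC3 : ContDiff ℝ 3 W := by
    rw [show (3 : WithTop ℕ∞) = 2 + 1 by norm_num, contDiff_succ_iff_deriv]
    refine ⟨hWdiff, by intro h; simp at h, ?_⟩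
    rw [hderivW]; exact hX.div_const I
  -- derivatives of X
  have hX1 : ContDiff ℝ 1 (deriv X) := by
    have h2 : ContDiff ℝ (1 + 1) X := by
      rw [show ((1 : WithTop ℕ∞) + 1) = 2 by norm_num]; exact hX
    exact (contDiff_succ_iff_deriv.mp h2).2.2
  have hXd : ∀ z : ℝ, HasDerivAt X (deriv X z) z :=
    fun z => (hX.differentiable (by norm_num) z).hasDerivAt
  have hXd2 : ∀ z : ℝ, HasDerivAt (deriv X) (iteratedDeriv 2 X z) z := by
    intro z
    have h1 : iteratedDeriv 2 X = deriv (deriv X) := by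
      rw [iteratedDeriv_succ, iteratedDeriv_one]
    rw [h1]
    exact (hX1.differentiable (by norm_num) z).hasDerivAt
  refine ⟨hWC3, ?_, ?_, ?_⟩
  · -- the ODE
    intro z
    set g : ℝ → ℂ := fun t => (γ - (t : ℂ) ^ 2) * W t with hg
    have hp : ∀ t : ℝ, HasDerivAt (fun t : ℝ => γ - (t : ℂ) ^ 2) (-(2 * t)) t := by
      intro t
      have h2 : HasDerivAt (fun t : ℝ => ((t : ℂ) ^ 2)) (2 * t) t := by
        have := (hasDerivAt_pow 2 ((t : ℂ))).comp_ofReal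
        simpa using this
      have h3 := (hasDerivAt_const t γ).sub h2
      rw [zero_sub] at h3
      exact h3
    have hd1 : ∀ t : ℝ, HasDerivAt g
        (-(2 * t) * W t + (γ - (t : ℂ) ^ 2) * (X t / I)) t :=
      fun t => (hp t).mul (hWD t)
    have hd2 : ∀ t : ℝ, HasDerivAt
        (fun t : ℝ => -(2 * t) * W t + (γ - (t : ℂ) ^ 2) * (X t / I))
        ((-2) * W t + (-(2 * t)) * (X t / I)
          + ((-(2 * t)) * (X t / I) + (γ - (t : ℂ) ^ 2) * (deriv X t / I))) t := by
      intro t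
      have hA : HasDerivAt (fun t : ℝ => -(2 * (t : ℂ)) * W t)
          ((-2) * W t + (-(2 * t)) * (X t / I)) t := by
        have hcoef : HasDerivAt (fun t : ℝ => -(2 * (t : ℂ))) (-2) t := by
          have := ((hasDerivAt_id ((t:ℂ))).const_mul (2 : ℂ)).comp_ofReal
          exact this.neg.congr_deriv (by simp)
        exact (hcoef.mul (hWD t)).congr_deriv (by ring)
      have hB : HasDerivAt (fun t : ℝ => (γ - (t : ℂ) ^ 2) * (X t / I))
          ((-(2 * t)) * (X t / I) + (γ - (t : ℂ) ^ 2) * (deriv X t / I)) t :=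
        (hp t).mul ((hXd t).div_const I)
      exact hA.add hB
    have hd3 : ∀ t : ℝ, HasDerivAt
        (fun t : ℝ => (-2) * W t + (-(2 * (t : ℂ))) * (X t / I)
          + ((-(2 * (t : ℂ))) * (X t / I) + (γ - (t : ℂ) ^ 2) * (deriv X t / I)))
        ((-2) * (X t / I) + ((-2) * (X t / I) + (-(2 * t)) * (deriv X t / I))
          + (((-2) * (X t / I) + (-(2 * t)) * (deriv X t / I))
            + ((-(2 * t)) * (deriv X t / I)
              + (γ - (t : ℂ) ^ 2) * (iteratedDeriv 2 X t / I)))) t := by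
      intro t
      have hcoef : HasDerivAt (fun t : ℝ => -(2 * (t : ℂ))) (-2) t := by
        have := ((hasDerivAt_id ((t:ℂ))).const_mul (2 : ℂ)).comp_ofReal
        exact this.neg.congr_deriv (by simp)
      have h1 : HasDerivAt (fun t : ℝ => (-2 : ℂ) * W t) ((-2) * (X t / I)) t := by
        simpa using (hWD t).const_mul (-2 : ℂ)
      have h2 : HasDerivAt (fun t : ℝ => (-(2 * (t : ℂ))) * (X t / I))
          ((-2) * (X t / I) + (-(2 * t)) * (deriv X t / I)) t :=
        hcoef.mul ((hXd t).div_const I)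
      have h3 : HasDerivAt (fun t : ℝ => (-(2 * (t : ℂ))) * (deriv X t / I))
          ((-2) * (deriv X t / I) + (-(2 * t)) * (iteratedDeriv 2 X t / I)) t :=
        hcoef.mul ((hXd2 t).div_const I)
      have h4 : HasDerivAt (fun t : ℝ => (γ - (t : ℂ) ^ 2) * (deriv X t / I))
          ((-(2 * t)) * (deriv X t / I) + (γ - (t : ℂ) ^ 2) * (iteratedDeriv 2 X t / I)) t :=
        (hp t).mul ((hXd2 t).div_const I)
      exact (h1.add h2).add (h2.add h4)
    have hD1 : deriv g = fun t : ℝ =>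
        -(2 * (t : ℂ)) * W t + (γ - (t : ℂ) ^ 2) * (X t / I) :=
      funext fun t => (hd1 t).deriv
    have hD2 : deriv (deriv g) = fun t : ℝ =>
        (-2) * W t + (-(2 * (t : ℂ))) * (X t / I)
          + ((-(2 * (t : ℂ))) * (X t / I) + (γ - (t : ℂ) ^ 2) * (deriv X t / I)) := by
      rw [hD1]; exact funext fun t => (hd2 t).deriv
    have hD3 : iteratedDeriv 3 g z =
        ((-2) * (X z / I) + ((-2) * (X z / I) + (-(2 * z)) * (deriv X z / I))
          + (((-2) * (X z / I) + (-(2 * z)) * (deriv X z / I))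
            + ((-(2 * z)) * (deriv X z / I)
              + (γ - (z : ℂ) ^ 2) * (iteratedDeriv 2 X z / I)))) := by
      rw [show (3:ℕ) = 2 + 1 from rfl, iteratedDeriv_succ, iteratedDeriv_succ,
        iteratedDeriv_one, hD2]
      exact (hd3 z).deriv
    rw [hD3, hderivW]
    have h2 : γ * ((z:ℂ) ^ 2 - γ) ^ 2 * X z
        - (((z:ℂ) ^ 2 - γ) * iteratedDeriv 2 X z + 6 * (z:ℂ) * deriv X z + 6 * X z) = 0 := by
      rw [heq z]; ring
    linear_combination h2 / I
  · -- limit at -∞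
    have h0 : Tendsto (fun n : ℝ => ∫ s in Set.Iic (-n), X s) atTop (nhds 0) := by
      have := tendsto_setIntegral_of_antitone (μ := volume) (f := X)
        (s := fun n : ℝ => Set.Iic (-n)) (fun n => measurableSet_Iic)
        (fun a b hab => Iic_subset_Iic.2 (by linarith)) ⟨0, hInt.integrableOn⟩
      have hempty : (⋂ n : ℝ, Set.Iic (-n)) = ∅ := by
        apply Set.eq_empty_iff_forall_notMem.2
        intro x hx
        have := Set.mem_iInter.1 hx (-(x - 1))
        simp at this
        linarith
      rwa [hempty, MeasureTheory.setIntegral_empty] at this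
    have hneg : Tendsto (fun z : ℝ => -z) atBot atTop := tendsto_neg_atBot_atTop
    have h1 : Tendsto F atBot (nhds 0) := by
      have h2 := h0.comp hneg
      simp only [Function.comp_def, neg_neg] at h2
      exact h2
    rw [hW]
    have := h1.div_const I
    simpa using this
  · -- limit at +∞
    have h0 : Tendsto F atTop (nhds I) := by
      have := tendsto_setIntegral_of_monotone (μ := volume) (f := X)
        (s := fun n : ℝ => Set.Iic n) (fun n => measurableSet_Iic)
        (fun a b hab => Iic_subset_Iic.2 hab) (by rw [Set.iUnion_Iic]; exact hInt.integrableOn)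
      rwa [Set.iUnion_Iic, MeasureTheory.setIntegral_univ] at this
    rw [hW]
    have := h0.div_const I
    simpa [div_self hI] using this
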